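/- Let (G,<) be an ordered group, K a division ring, and K((G,<)) the Malcev-Neumann series field. Let α be an ordinal and {H_β}_{β≤α} a family of principal convex subgroups of G order-isomorphic to {β : β ≤ α}, with H_β = {x : t_β^{-n} ≤ x ≤ t_β^n for some n} for chosen elements t_β > 1. If {f_β}_{β≤α} is a family in K((G,<)) with supp(f_β) ⊆ {x ∈ H_β : x ≥ 1} for all β, then the union ⋃_{β≤α} supp(t_β f_β) is well-ordered and each x ∈ G lies in supp(t_β f_β) for only finitely many β; hence the sum Σ_{β≤α} t_β f_β is a well-defined element of K((G,<)). -/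
import Mathlib


/-- Let `K((G,<))` be a Malcev-Neumann series field (axiomatised by
its coefficient function `coeff` and the embedding `emb` of `G`).  Let `α` be an ordinal
and `{H_β}_{β ≤ α}` a strictly increasing family of principal convex subgroups
`H_β = {x : t_β⁻ⁿ ≤ x ≤ t_βⁿ for some n}` with `t_β > 1`.  If `f_β` has support
contained in `{x ∈ H_β : x ≥ 1}` for each `β ≤ α`, then `⋃_β supp(t_β·f_β)` is
well-ordered, each `x ∈ G` lies in only finitely many `supp(t_β·f_β)`, and hence the
sum `Σ_{β ≤ α} t_β·f_β` is a well-defined element of `K((G,<))`. -/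
theorem summable_family_in_malcev_neumann
    (K G D : Type*) [DivisionRing K] [Group G] [LinearOrder G]
    [CovariantClass G G (· * ·) (· ≤ ·)]
    [CovariantClass G G (Function.swap (· * ·)) (· ≤ ·)]
    [Ring D] (coeff : D → G → K)
    (hext : Function.Injective coeff)
    (hadd : ∀ f g : D, ∀ x : G, coeff (f + g) x = coeff f x + coeff g x)
    (hwf : ∀ f : D, (Function.support (coeff f)).IsWF)
    (hsurj : ∀ F : G → K, (Function.support F).IsWF → ∃ f : D, coeff f = F)
    (hmul : ∀ f g : D, ∀ x : G, coeff (f * g) x =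
      ∑ᶠ p : G × G, if p.1 * p.2 = x then coeff f p.1 * coeff g p.2 else 0)
    (emb : G → D) (hemb : ∀ g x : G, coeff (emb g) x = if x = g then 1 else 0)
    (α : Ordinal) (t : ↥(Set.Iic α) → G)
    (ht : ∀ β, 1 < t β)
    (hchain : ∀ β γ : ↥(Set.Iic α), β < γ →
      {x : G | ∃ n : ℕ, ((t β)⁻¹) ^ n ≤ x ∧ x ≤ (t β) ^ n} ⊂
      {x : G | ∃ n : ℕ, ((t γ)⁻¹) ^ n ≤ x ∧ x ≤ (t γ) ^ n})
    (f : ↥(Set.Iic α) → D)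
    (hsupp : ∀ β, ∀ x : G, coeff (f β) x ≠ 0 →
      1 ≤ x ∧ ∃ n : ℕ, ((t β)⁻¹) ^ n ≤ x ∧ x ≤ (t β) ^ n) :
    (⋃ β, Function.support (coeff (emb (t β) * f β))).IsWF ∧
    (∀ x : G, {β | coeff (emb (t β) * f β) x ≠ 0}.Finite) ∧
    ∃ F : D, ∀ x : G, coeff F x = ∑ᶠ β, coeff (emb (t β) * f β) x := by
  -- shift formula: left multiplication by emb g translates the coefficient function
  have key : ∀ g : G, ∀ h : D, ∀ x : G, coeff (emb g * h) x = coeff h (g⁻¹ * x) := by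
    intro g h x
    rw [hmul]
    rw [finsum_eq_single _ ((g, g⁻¹ * x) : G × G)]
    · simp [hemb, mul_inv_cancel_left]
    · rintro ⟨p1, p2⟩ hp
      simp only [hemb]
      by_cases h1 : p1 = g
      · subst h1
        by_cases h2 : p1 * p2 = x
        · have hp2 : p2 = p1⁻¹ * x := by rw [← h2]; group
          exact absurd (by rw [hp2]) hp
        · simp [h2]
      · simp [h1]
  set S : ↥(Set.Iic α) → Set G := fun β => Function.support (coeff (emb (t β) * f β)) with hSdef
  -- powers of t β are below t γ for β < γ
  have hpow : ∀ β γ : ↥(Set.Iic α), β < γ → ∀ m : ℕ, t β ^ m < t γ := by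
    intro β γ h m
    by_contra hle
    push_neg at hle
    refine (hchain β γ h).2 ?_
    rintro x ⟨k, h1, h2⟩
    refine ⟨m * k, ?_, ?_⟩
    · have h3 : (t γ ^ k)⁻¹ ≤ x := by rwa [← inv_pow]
      have h4 : (t β ^ (m * k))⁻¹ ≤ (t γ ^ k)⁻¹ := by
        rw [inv_le_inv_iff]
        calc t γ ^ k ≤ (t β ^ m) ^ k := pow_le_pow_left' hle k
          _ = t β ^ (m * k) := (pow_mul _ _ _).symm
      rw [inv_pow]
      exact h4.trans h3
    · calc x ≤ t γ ^ k := h2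
        _ ≤ (t β ^ m) ^ k := pow_le_pow_left' hle k
        _ = t β ^ (m * k) := (pow_mul _ _ _).symm
  -- strict layering of supports
  have hlt : ∀ β γ : ↥(Set.Iic α), β < γ → ∀ x ∈ S β, ∀ y ∈ S γ, x < y := by
    intro β γ hβγ x hx y hy
    rw [hSdef, Function.mem_support, key] at hx hy
    obtain ⟨h1x, n, _, h2x⟩ := hsupp β _ hx
    obtain ⟨h1y, _⟩ := hsupp γ _ hy
    have hx' : x ≤ t β ^ (n + 1) := by
      have := mul_le_mul_right h2x (t β)
      rwa [mul_inv_cancel_left, ← pow_succ'] at this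
    have hy' : t γ ≤ y := by
      have := mul_le_mul_right h1y (t γ)
      rwa [mul_one, mul_inv_cancel_left] at this
    exact lt_of_le_of_lt hx' (lt_of_lt_of_le (hpow β γ hβγ (n + 1)) hy')
  -- each x is in at most one support
  have huniq : ∀ x : G, {β | coeff (emb (t β) * f β) x ≠ 0}.Subsingleton := by
    intro x β hβ γ hγ
    by_contra hne
    rcases lt_or_gt_of_ne hne with h | h
    · exact lt_irrefl x (hlt β γ h x hβ x hγ)
    · exact lt_irrefl x (hlt γ β h x hγ x hβ)
  -- well-foundedness of the union
  have hWF : (⋃ β, S β).IsWF := by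
    rw [Set.isWF_iff_no_descending_seq]
    intro g hg hmem
    choose β hβ using fun n => Set.mem_iUnion.mp (hmem n)
    have hanti : ∀ n m : ℕ, n < m → β m ≤ β n := by
      intro n m h
      by_contra hc
      push_neg at hc
      exact absurd (hlt _ _ hc _ (hβ n) _ (hβ m)) (not_lt.2 (hg h).le)
    -- the index sequence attains a minimum
    obtain ⟨o, ⟨N, hN⟩, hmin⟩ := Ordinal.lt_wf.has_min (Set.range fun n => ((β n : Set.Iic α) : Ordinal)) ⟨_, ⟨0, rfl⟩⟩
    have hconst : ∀ n : ℕ, β (n + N) = β N := by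
      intro n
      have h1 : β (n + N) ≤ β N := by
        rcases Nat.eq_or_lt_of_le (Nat.le_add_left N n) with h | h
        · rw [← h]
        · exact hanti _ _ h
      have h2 : ¬ ((β (n + N) : Set.Iic α) : Ordinal) < o := hmin _ ⟨n + N, rfl⟩
      have hN' : ((β N : Set.Iic α) : Ordinal) = o := hN
      rw [← hN'] at h2
      exact le_antisymm h1 (not_lt.1 (mt Subtype.coe_lt_coe.2 h2))
    refine (Set.isWF_iff_no_descending_seq.1 (hwf (emb (t (β N)) * f (β N)))) (fun n => g (n + N)) ?_ ?_
    · intro a b hab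
      exact hg (by omega)
    · intro n
      have := hβ (n + N)
      rwa [hconst n] at this
  refine ⟨hWF, fun x => (huniq x).finite, ?_⟩
  -- the sum exists
  set F : G → K := fun x => ∑ᶠ β, coeff (emb (t β) * f β) x with hF
  have hsuppF : Function.support F ⊆ ⋃ β, S β := by
    intro x hx
    rw [Function.mem_support] at hx
    by_contra hc
    apply hx
    apply finsum_eq_zero_of_forall_eq_zero
    intro β
    by_contra hβ
    exact hc (Set.mem_iUnion.2 ⟨β, hβ⟩)
  obtain ⟨F', hF'⟩ := hsurj F (hWF.mono hsuppF)
  exact ⟨F', fun x => by rw [hF']⟩
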